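/- For all θ, θ' ∈ (0,π), either C(θ) ∩ C(θ') = ∅ or C(θ) = C(θ'); in particular, if θ' ∈ C(θ) then C(θ') = C(θ). -/

import Mathlib

open Real MeasureTheory Set Filter Topology
open scoped ENNReal NNReal

noncomputable section

namespace RandomBilliard

/-- The four maps `T_1, …, T_4` of the Feres random map
(index `i : Fin 4` stands for `T_{i+1}`). -/
def T (α : ℝ) : Fin 4 → ℝ → ℝ
  | 0 => fun θ => θ + 2 * α
  | 1 => fun θ => -θ + 2 * π - 4 * α
  | 2 => fun θ => θ - 2 * α
  | 3 => fun θ => -θ + 4 * α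

/-- `u_a(θ) = (1/2)(1 + tan a / tan θ)`. -/
def u (a θ : ℝ) : ℝ := 1 / 2 * (1 + Real.tan a / Real.tan θ)

/-- The probabilities `p_1, …, p_4` of the Feres random map
(index `i : Fin 4` stands for `p_{i+1}`). -/
def p (α : ℝ) : Fin 4 → ℝ → ℝ
  | 0 => fun θ =>
      if θ < α then 1
      else if θ < π - 3 * α then u α θ
      else if θ < π - 2 * α then 2 * Real.cos (2 * α) * u (2 * α) θ
      else 0
  | 1 => fun θ =>
      if θ < π - 3 * α then 0
      else if θ < π - 2 * α then u α θ - 2 * Real.cos (2 * α) * u (2 * α) θ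
      else if θ < π - α then u α θ
      else 0
  | 2 => fun θ =>
      if θ < 2 * α then 0
      else if θ < 3 * α then 2 * Real.cos (2 * α) * u (2 * α) (-θ)
      else if θ < π - α then u α (-θ)
      else 1
  | 3 => fun θ =>
      if θ < α then 0
      else if θ < 2 * α then u α (-θ)
      else if θ < 3 * α then u α (-θ) - 2 * Real.cos (2 * α) * u (2 * α) (-θ)
      else 0

/-- `iterT α x k θ = T_x^{(k)}(θ) = T_{x_k} ∘ ⋯ ∘ T_{x_1}(θ)`
(the term `x j : Fin 4` stands for the symbol `x_{j+1}`). -/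
def iterT (α : ℝ) (x : ℕ → Fin 4) : ℕ → ℝ → ℝ
  | 0 => fun θ => θ
  | k + 1 => fun θ => T α (x k) (iterT α x k θ)

/-- `Σ_θ`: the admissible symbol sequences for `θ`, i.e. those whose every finite
prefix has positive probability. -/
def SigmaTheta (α θ : ℝ) : Set (ℕ → Fin 4) :=
  {x | ∀ k : ℕ, 0 < ∏ j ∈ Finset.range k, p α (x j) (iterT α x j θ)}

/-- `C(θ)`: all possible future images of `θ` under the Feres random map. -/
def Cset (α θ : ℝ) : Set ℝ :=
  {θ' | θ' ∈ Set.Ioo 0 π ∧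
    ∃ (x : ℕ → Fin 4) (k : ℕ), x ∈ SigmaTheta α θ ∧ iterT α x k θ = θ'}

/-- The probability measure `μ(A) = (1/2) ∫_A sin θ dθ` on `[0, π]`. -/
def mu0 : Measure ℝ :=
  (volume.restrict (Set.Icc 0 π)).withDensity fun θ => ENNReal.ofReal (1 / 2 * Real.sin θ)

/-- One step of the evolution of a measure under the Feres random map:
`(stepMeasure α ν)(A) = ∫ K(θ, A) dν(θ)`, where `K(θ, A) = Σ_i p_i(θ) 1_A(T_i θ)`. -/
def stepMeasure (α : ℝ) (ν : Measure ℝ) : Measure ℝ :=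
  ∑ i : Fin 4, Measure.map (T α i) (ν.withDensity fun θ => ENNReal.ofReal (p α i θ))

/-- One step of the evolution of a measure under the random billiard map in the circle
`F̄(s, θ) = (s + 2 T_i(θ) mod 2π, T_i(θ))` with probability `p_i(θ)`. -/
def circleStep (α : ℝ) (ν : Measure (ℝ × ℝ)) : Measure (ℝ × ℝ) :=
  ∑ i : Fin 4,
    Measure.map
      (fun q : ℝ × ℝ => (toIcoMod Real.two_pi_pos 0 (q.1 + 2 * T α i q.2), T α i q.2))
      (ν.withDensity fun q => ENNReal.ofReal (p α i q.2))

/-- The transition kernel `K(θ', ·) = Σ_i p_i(θ') δ_{T_i(θ')}` of the Feres random map. -/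
def feresKernel (α : ℝ) (t : ℝ) : Measure ℝ :=
  ∑ i : Fin 4, ENNReal.ofReal (p α i t) • Measure.dirac (T α i t)

/-- `k`-step iterates of a transition kernel. -/
def kerIterate (κ : ℝ → Measure ℝ) : ℕ → ℝ → Measure ℝ
  | 0 => fun t => Measure.dirac t
  | k + 1 => fun t => (κ t).bind (kerIterate κ k)

/-- The probability that a Markov chain with kernel `κ` started at `t` satisfies
`θ_0 ∈ B 0, …, θ_n ∈ B n`. -/
def cylProb (κ : ℝ → Measure ℝ) : ℕ → (ℕ → Set ℝ) → ℝ → ℝ≥0∞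
  | 0 => fun B t => Set.indicator (B 0) (fun _ => (1 : ℝ≥0∞)) t
  | n + 1 => fun B t =>
      Set.indicator (B 0)
        (fun _ => ∫⁻ t', cylProb κ n (fun k => B (k + 1)) t' ∂(κ t)) t

/-- `ν` is the Markov path measure on `ℕ → ℝ` (given by the Ionescu–Tulcea construction)
with initial distribution `ρ` and transition kernel `κ`, characterized by its values
on cylinder sets. -/
def IsMarkovPathMeasure (κ : ℝ → Measure ℝ) (ρ : Measure ℝ) (ν : Measure (ℕ → ℝ)) : Prop :=
  ∀ (n : ℕ) (B : ℕ → Set ℝ), (∀ k, MeasurableSet (B k)) →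
    ν {ω | ∀ k ≤ n, ω k ∈ B k} = ∫⁻ t, cylProb κ n B t ∂ρ

/-- The shift map on sequences. -/
def shift : (ℕ → ℝ) → ℕ → ℝ := fun ω n => ω (n + 1)

/-- Aperiodicity of the Markov chain with kernel `κ` on the state space `S`:
for every state, every common divisor of the return times having positive
probability equals `1` (i.e. every state has period 1). -/
def AperiodicChain (κ : ℝ → Measure ℝ) (S : Set ℝ) : Prop :=
  ∀ t ∈ S, ∀ d : ℕ, (∀ k : ℕ, 1 ≤ k → 0 < kerIterate κ k t {t} → d ∣ k) → d = 1

end RandomBilliard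

open RandomBilliard

namespace RBAux

open Real Set

/-! ### Evaluation lemmas -/

lemma p0e (α t : ℝ) : p α 0 t =
    if t < α then 1
    else if t < π - 3 * α then u α t
    else if t < π - 2 * α then 2 * Real.cos (2 * α) * u (2 * α) t
    else 0 := rfl

lemma p1e (α t : ℝ) : p α 1 t =
    if t < π - 3 * α then 0
    else if t < π - 2 * α then u α t - 2 * Real.cos (2 * α) * u (2 * α) t
    else if t < π - α then u α t
    else 0 := rfl

lemma p2e (α t : ℝ) : p α 2 t =
    if t < 2 * α then 0
    else if t < 3 * α then 2 * Real.cos (2 * α) * u (2 * α) (-t)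
    else if t < π - α then u α (-t)
    else 1 := rfl

lemma p3e (α t : ℝ) : p α 3 t =
    if t < α then 0
    else if t < 2 * α then u α (-t)
    else if t < 3 * α then u α (-t) - 2 * Real.cos (2 * α) * u (2 * α) (-t)
    else 0 := rfl

/-! ### Trigonometric helpers -/

lemma tanp {x : ℝ} (h0 : 0 < x) (h : x < π / 2) : 0 < Real.tan x :=
  Real.tan_pos_of_pos_of_lt_pi_div_two h0 h

lemma u_pos {a t : ℝ} (ha0 : 0 < a) (ha : a < π / 2) (h1 : 0 < t) (h2 : t < π - a) :
    0 < u a t := by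
  have hta : 0 < Real.tan a := tanp ha0 ha
  rcases lt_trichotomy t (π / 2) with h | h | h
  · have htt : 0 < Real.tan t := tanp h1 h
    have hd : 0 < Real.tan a / Real.tan t := div_pos hta htt
    show (0:ℝ) < 1 / 2 * (1 + Real.tan a / Real.tan t)
    linarith
  · show (0:ℝ) < 1 / 2 * (1 + Real.tan a / Real.tan t)
    rw [h, Real.tan_pi_div_two, div_zero]; norm_num
  · have hs : 0 < π - t := by linarith [Real.pi_pos]
    have hs2 : π - t < π / 2 := by linarith
    have htp : 0 < Real.tan (π - t) := tanp hs hs2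
    have hlt : Real.tan a < Real.tan (π - t) :=
      Real.tan_lt_tan_of_nonneg_of_lt_pi_div_two (le_of_lt ha0) hs2 (by linarith)
    have hd : Real.tan a / Real.tan (π - t) < 1 := (div_lt_one htp).2 hlt
    have htan : Real.tan t = -Real.tan (π - t) := by rw [Real.tan_pi_sub]; ring
    show (0:ℝ) < 1 / 2 * (1 + Real.tan a / Real.tan t)
    rw [htan, div_neg]
    linarith

lemma u_neg_pos {a t : ℝ} (ha0 : 0 < a) (ha : a < π / 2) (h1 : a < t) (h2 : t < π) :
    0 < u a (-t) := by
  have hta : 0 < Real.tan a := tanp ha0 ha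
  rcases lt_trichotomy t (π / 2) with h | h | h
  · have htt : 0 < Real.tan t := tanp (by linarith) h
    have hlt : Real.tan a < Real.tan t :=
      Real.tan_lt_tan_of_nonneg_of_lt_pi_div_two (le_of_lt ha0) h h1
    have hd : Real.tan a / Real.tan t < 1 := (div_lt_one htt).2 hlt
    show (0:ℝ) < 1 / 2 * (1 + Real.tan a / Real.tan (-t))
    rw [Real.tan_neg, div_neg]
    linarith
  · show (0:ℝ) < 1 / 2 * (1 + Real.tan a / Real.tan (-t))
    rw [h, Real.tan_neg, Real.tan_pi_div_two, neg_zero, div_zero]; norm_num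
  · have hs : 0 < π - t := by linarith
    have hs2 : π - t < π / 2 := by linarith
    have htp : 0 < Real.tan (π - t) := tanp hs hs2
    have htan : -Real.tan t = Real.tan (π - t) := by rw [Real.tan_pi_sub]
    have hd : 0 < Real.tan a / Real.tan (π - t) := div_pos hta htp
    show (0:ℝ) < 1 / 2 * (1 + Real.tan a / Real.tan (-t))
    rw [Real.tan_neg, htan]
    linarith

lemma u_neg_self {a : ℝ} (h : Real.tan a ≠ 0) : u a (-a) = 0 := by
  show 1 / 2 * (1 + Real.tan a / Real.tan (-a)) = 0
  rw [Real.tan_neg, div_neg, div_self h]; norm_num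

lemma K0 {α : ℝ} (h1 : Real.cos α ≠ 0) (h3 : Real.cos (3 * α) ≠ 0) :
    (2 * Real.cos (2 * α) - 1) * Real.tan (3 * α) = 2 * Real.sin (2 * α) - Real.tan α := by
  have c3 : Real.cos (3 * α) = Real.cos α * (4 * Real.cos α ^ 2 - 3) := by
    rw [Real.cos_three_mul]; ring
  have h4 : (4 * Real.cos α ^ 2 - 3) ≠ 0 := by
    rw [c3] at h3; exact right_ne_zero_of_mul h3
  rw [Real.tan_eq_sin_div_cos, Real.tan_eq_sin_div_cos, c3, Real.sin_three_mul,
    Real.sin_two_mul, Real.cos_two_mul]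
  field_simp
  rw [div_eq_iff (by intro h; apply h4; linarith)]
  linear_combination (-4 * Real.sin α * (4 * Real.cos α ^ 2 - 3)) *
    Real.sin_sq_add_cos_sq α

lemma E2 {α : ℝ} (h2 : Real.cos (2 * α) ≠ 0) :
    Real.cos (2 * α) * Real.tan (2 * α) = Real.sin (2 * α) := by
  rw [Real.tan_eq_sin_div_cos]; field_simp

lemma comb_eq {α : ℝ} (h1 : Real.cos α ≠ 0) (h2 : Real.cos (2 * α) ≠ 0)
    (h3 : Real.cos (3 * α) ≠ 0) {T : ℝ} (hT : T ≠ 0) :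
    1 / 2 * (1 + Real.tan α / T) - 2 * Real.cos (2 * α) * (1 / 2 * (1 + Real.tan (2 * α) / T))
      = -((2 * Real.cos (2 * α) - 1) * (T + Real.tan (3 * α))) / (2 * T) := by
  have k := K0 h1 h3
  have e := E2 h2
  field_simp
  rw [mul_comm α 3]
  linear_combination k - 2 * e

lemma cos_ne {α : ℝ} (hα : α ∈ Set.Ioo 0 (π / 6)) :
    Real.cos α ≠ 0 ∧ Real.cos (2 * α) ≠ 0 ∧ Real.cos (3 * α) ≠ 0 := by
  obtain ⟨a0, a6⟩ := hα
  have pip := Real.pi_pos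
  refine ⟨ne_of_gt ?_, ne_of_gt ?_, ne_of_gt ?_⟩ <;>
    exact Real.cos_pos_of_mem_Ioo ⟨by linarith, by linarith⟩

lemma comb_apply {α : ℝ} (hα : α ∈ Set.Ioo 0 (π / 6)) {t : ℝ} (ht : Real.tan t ≠ 0) :
    u α t - 2 * Real.cos (2 * α) * u (2 * α) t
      = -((2 * Real.cos (2 * α) - 1) * (Real.tan t + Real.tan (3 * α))) / (2 * Real.tan t) := by
  obtain ⟨c1, c2, c3⟩ := cos_ne hα
  exact comb_eq c1 c2 c3 ht

lemma comb_apply_neg {α : ℝ} (hα : α ∈ Set.Ioo 0 (π / 6)) {t : ℝ} (ht : Real.tan t ≠ 0) :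
    u α (-t) - 2 * Real.cos (2 * α) * u (2 * α) (-t)
      = -((2 * Real.cos (2 * α) - 1) * (-Real.tan t + Real.tan (3 * α)))
          / (2 * -Real.tan t) := by
  obtain ⟨c1, c2, c3⟩ := cos_ne hα
  have h : u α (-t) - 2 * Real.cos (2 * α) * u (2 * α) (-t)
      = 1 / 2 * (1 + Real.tan α / Real.tan (-t))
        - 2 * Real.cos (2 * α) * (1 / 2 * (1 + Real.tan (2 * α) / Real.tan (-t))) := rfl
  rw [h, Real.tan_neg]
  exact comb_eq c1 c2 c3 (neg_ne_zero.2 ht)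

lemma A_pos {α : ℝ} (hα : α ∈ Set.Ioo 0 (π / 6)) : 0 < 2 * Real.cos (2 * α) - 1 := by
  obtain ⟨a0, a6⟩ := hα
  have pip := Real.pi_pos
  have h : Real.cos (π / 3) < Real.cos (2 * α) :=
    Real.cos_lt_cos_of_nonneg_of_le_pi (by linarith) (by linarith) (by linarith)
  rw [Real.cos_pi_div_three] at h
  linarith

lemma comb_pos_pos {α : ℝ} (hα : α ∈ Set.Ioo 0 (π / 6)) {t : ℝ} (h1 : 0 < t)
    (h2 : t < 3 * α) : 0 < u α (-t) - 2 * Real.cos (2 * α) * u (2 * α) (-t) := by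
  obtain ⟨a0, a6⟩ := id hα
  have pip := Real.pi_pos
  have h3 : (3:ℝ) * α < π / 2 := by linarith
  have htt : 0 < Real.tan t := tanp h1 (by linarith)
  have hlt : Real.tan t < Real.tan (3 * α) :=
    Real.tan_lt_tan_of_nonneg_of_lt_pi_div_two (le_of_lt h1) h3 h2
  rw [comb_apply_neg hα (ne_of_gt htt)]
  refine div_pos_iff.2 (Or.inr ⟨?_, by linarith⟩)
  nlinarith [A_pos hα]

lemma comb_pos_neg {α : ℝ} (hα : α ∈ Set.Ioo 0 (π / 6)) {t : ℝ} (h1 : π - 3 * α < t)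
    (h2 : t < π - 2 * α) : 0 < u α t - 2 * Real.cos (2 * α) * u (2 * α) t := by
  obtain ⟨a0, a6⟩ := id hα
  have pip := Real.pi_pos
  have hs0 : 0 < π - t := by linarith
  have hs2 : π - t < 3 * α := by linarith
  have h3 : (3:ℝ) * α < π / 2 := by linarith
  have hts : 0 < Real.tan (π - t) := tanp hs0 (by linarith)
  have hlt : Real.tan (π - t) < Real.tan (3 * α) :=
    Real.tan_lt_tan_of_nonneg_of_lt_pi_div_two (le_of_lt hs0) h3 hs2
  have htan : Real.tan t = -Real.tan (π - t) := by rw [Real.tan_pi_sub]; ring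
  have htne : Real.tan t ≠ 0 := by rw [htan]; exact neg_ne_zero.2 (ne_of_gt hts)
  rw [comb_apply hα htne, htan]
  refine div_pos_iff.2 (Or.inr ⟨?_, by linarith⟩)
  nlinarith [A_pos hα]

lemma comb_zero {α : ℝ} (hα : α ∈ Set.Ioo 0 (π / 6)) :
    u α (π - 3 * α) - 2 * Real.cos (2 * α) * u (2 * α) (π - 3 * α) = 0 := by
  obtain ⟨a0, a6⟩ := id hα
  have pip := Real.pi_pos
  have ht3 : 0 < Real.tan (3 * α) := tanp (by linarith) (by linarith)
  have htne : Real.tan (π - 3 * α) ≠ 0 := by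
    rw [Real.tan_pi_sub]; exact neg_ne_zero.2 (ne_of_gt ht3)
  rw [comb_apply hα htne, Real.tan_pi_sub]
  ring

/-! ### The reversibility lemma -/

def pinv : Fin 4 → Fin 4 := ![2, 1, 0, 3]

lemma T_pinv (α : ℝ) (i : Fin 4) (t : ℝ) : T α (pinv i) (T α i t) = t := by
  fin_cases i <;> show (_ : ℝ) = _ <;> simp [T, pinv] <;> ring

lemma rev0 {α : ℝ} (hα : α ∈ Set.Ioo 0 (π / 6)) {t : ℝ} (ht : t ∈ Set.Ioo 0 π)
    (hp : 0 < p α 0 t) : (t + 2 * α) ∈ Set.Ioo 0 π ∧ 0 < p α 2 (t + 2 * α) := by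
  obtain ⟨a0, a6⟩ := id hα
  obtain ⟨t0, tπ⟩ := ht
  have pip := Real.pi_pos
  have hc2 : 0 < Real.cos (2 * α) := Real.cos_pos_of_mem_Ioo ⟨by linarith, by linarith⟩
  rw [p0e] at hp
  rw [p2e]
  split_ifs at hp with h1 h2 h3
  · refine ⟨⟨by linarith, by linarith⟩, ?_⟩
    rw [if_neg (not_lt.2 (by linarith)), if_pos (by linarith : t + 2 * α < 3 * α)]
    exact mul_pos (mul_pos two_pos hc2)
      (u_neg_pos (by linarith) (by linarith) (by linarith) (by linarith))
  · push_neg at h1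
    refine ⟨⟨by linarith, by linarith⟩, ?_⟩
    rw [if_neg (not_lt.2 (by linarith)), if_neg (not_lt.2 (by linarith)),
      if_pos (by linarith : t + 2 * α < π - α)]
    exact u_neg_pos a0 (by linarith) (by linarith) (by linarith)
  · push_neg at h1; push_neg at h2
    refine ⟨⟨by linarith, by linarith⟩, ?_⟩
    rw [if_neg (not_lt.2 (by linarith)), if_neg (not_lt.2 (by linarith)),
      if_neg (not_lt.2 (by linarith))]
    norm_num
  · exact (lt_irrefl _ hp).elim

lemma rev2 {α : ℝ} (hα : α ∈ Set.Ioo 0 (π / 6)) {t : ℝ} (ht : t ∈ Set.Ioo 0 π)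
    (hp : 0 < p α 2 t) : (t - 2 * α) ∈ Set.Ioo 0 π ∧ 0 < p α 0 (t - 2 * α) := by
  obtain ⟨a0, a6⟩ := id hα
  obtain ⟨t0, tπ⟩ := ht
  have pip := Real.pi_pos
  have hc2 : 0 < Real.cos (2 * α) := Real.cos_pos_of_mem_Ioo ⟨by linarith, by linarith⟩
  rw [p2e] at hp
  rw [p0e]
  split_ifs at hp with h1 h2 h3
  · exact (lt_irrefl _ hp).elim
  · push_neg at h1
    have h2t : 2 * α < t := by
      rcases h1.lt_or_eq with h | h
      · exact h
      · exfalso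
        rw [← h, u_neg_self (ne_of_gt (tanp (by linarith) (by linarith)))] at hp
        rw [mul_zero] at hp
        exact lt_irrefl 0 hp
    refine ⟨⟨by linarith, by linarith⟩, ?_⟩
    rw [if_pos (by linarith : t - 2 * α < α)]
    norm_num
  · push_neg at h2
    refine ⟨⟨by linarith, by linarith⟩, ?_⟩
    rw [if_neg (not_lt.2 (by linarith)), if_pos (by linarith : t - 2 * α < π - 3 * α)]
    exact u_pos a0 (by linarith) (by linarith) (by linarith)
  · push_neg at h3
    refine ⟨⟨by linarith, by linarith⟩, ?_⟩
    rw [if_neg (not_lt.2 (by linarith)), if_neg (not_lt.2 (by linarith)),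
      if_pos (by linarith : t - 2 * α < π - 2 * α)]
    exact mul_pos (mul_pos two_pos hc2)
      (u_pos (by linarith) (by linarith) (by linarith) (by linarith))

lemma rev1 {α : ℝ} (hα : α ∈ Set.Ioo 0 (π / 6)) {t : ℝ} (ht : t ∈ Set.Ioo 0 π)
    (hp : 0 < p α 1 t) :
    (-t + 2 * π - 4 * α) ∈ Set.Ioo 0 π ∧ 0 < p α 1 (-t + 2 * π - 4 * α) := by
  obtain ⟨a0, a6⟩ := id hα
  obtain ⟨t0, tπ⟩ := ht
  have pip := Real.pi_pos
  rw [p1e] at hp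
  rw [p1e]
  split_ifs at hp with h1 h2 h3
  · exact (lt_irrefl _ hp).elim
  · push_neg at h1
    have hgt : π - 3 * α < t := by
      rcases h1.lt_or_eq with h | h
      · exact h
      · exfalso; rw [← h, comb_zero hα] at hp; exact lt_irrefl 0 hp
    refine ⟨⟨by linarith, by linarith⟩, ?_⟩
    rw [if_neg (not_lt.2 (by linarith)), if_neg (not_lt.2 (by linarith)),
      if_pos (by linarith : -t + 2 * π - 4 * α < π - α)]
    exact u_pos a0 (by linarith) (by linarith) (by linarith)
  · push_neg at h2
    refine ⟨⟨by linarith, by linarith⟩, ?_⟩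
    rw [if_neg (not_lt.2 (by linarith))]
    by_cases hc : -t + 2 * π - 4 * α < π - 2 * α
    · rw [if_pos hc]
      exact comb_pos_neg hα (by linarith) hc
    · push_neg at hc
      rw [if_neg (not_lt.2 hc), if_pos (by linarith : -t + 2 * π - 4 * α < π - α)]
      exact u_pos a0 (by linarith) (by linarith) (by linarith)
  · exact (lt_irrefl _ hp).elim

lemma rev3 {α : ℝ} (hα : α ∈ Set.Ioo 0 (π / 6)) {t : ℝ} (ht : t ∈ Set.Ioo 0 π)
    (hp : 0 < p α 3 t) : (-t + 4 * α) ∈ Set.Ioo 0 π ∧ 0 < p α 3 (-t + 4 * α) := by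
  obtain ⟨a0, a6⟩ := id hα
  obtain ⟨t0, tπ⟩ := ht
  have pip := Real.pi_pos
  rw [p3e] at hp
  rw [p3e]
  split_ifs at hp with h1 h2 h3
  · exact (lt_irrefl _ hp).elim
  · push_neg at h1
    have hgt : α < t := by
      rcases h1.lt_or_eq with h | h
      · exact h
      · exfalso
        rw [← h, u_neg_self (ne_of_gt (tanp a0 (by linarith)))] at hp
        exact lt_irrefl 0 hp
    refine ⟨⟨by linarith, by linarith⟩, ?_⟩
    rw [if_neg (not_lt.2 (by linarith)), if_neg (not_lt.2 (by linarith)),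
      if_pos (by linarith : -t + 4 * α < 3 * α)]
    exact comb_pos_pos hα (by linarith) (by linarith)
  · push_neg at h2
    refine ⟨⟨by linarith, by linarith⟩, ?_⟩
    rw [if_neg (not_lt.2 (by linarith))]
    by_cases hc : -t + 4 * α < 2 * α
    · rw [if_pos hc]
      exact u_neg_pos a0 (by linarith) (by linarith) (by linarith)
    · push_neg at hc
      rw [if_neg (not_lt.2 hc), if_pos (by linarith : -t + 4 * α < 3 * α)]
      exact comb_pos_pos hα (by linarith) (by linarith)
  · exact (lt_irrefl _ hp).elim

lemma rev {α : ℝ} (hα : α ∈ Set.Ioo 0 (π / 6)) (i : Fin 4) {t : ℝ}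
    (ht : t ∈ Set.Ioo 0 π) (hp : 0 < p α i t) :
    T α i t ∈ Set.Ioo 0 π ∧ 0 < p α (pinv i) (T α i t) := by
  fin_cases i
  · exact rev0 hα ht hp
  · exact rev1 hα ht hp
  · exact rev2 hα ht hp
  · exact rev3 hα ht hp

/-! ### Admissible extension -/

def nxt (α t : ℝ) : Fin 4 := if t ≤ 2 * α then 0 else 2

def st (α t : ℝ) : ℕ → ℝ
  | 0 => t
  | n + 1 => T α (nxt α (st α t n)) (st α t n)

lemma nxt_spec {α : ℝ} (hα : α ∈ Set.Ioo 0 (π / 6)) {t : ℝ} (ht : t ∈ Set.Ioo 0 π) :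
    0 < p α (nxt α t) t ∧ T α (nxt α t) t ∈ Set.Ioo 0 π := by
  obtain ⟨a0, a6⟩ := id hα
  obtain ⟨t0, tπ⟩ := ht
  have pip := Real.pi_pos
  have hc2 : 0 < Real.cos (2 * α) := Real.cos_pos_of_mem_Ioo ⟨by linarith, by linarith⟩
  by_cases h : t ≤ 2 * α
  · have hn : nxt α t = 0 := if_pos h
    rw [hn]
    constructor
    · rw [p0e]
      split_ifs with g1 g2 g3
      · norm_num
      · exact u_pos a0 (by linarith) t0 (by linarith)
      · exfalso; push_neg at g2; linarith
      · exfalso; push_neg at g2; linarith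
    · exact ⟨by show (0:ℝ) < t + 2 * α; linarith, by show t + 2 * α < π; linarith⟩
  · push_neg at h
    have hn : nxt α t = 2 := if_neg (not_le.2 h)
    rw [hn]
    constructor
    · rw [p2e]
      split_ifs with g1 g2 g3
      · exfalso; linarith
      · exact mul_pos (mul_pos two_pos hc2)
          (u_neg_pos (by linarith) (by linarith) h (by linarith))
      · exact u_neg_pos a0 (by linarith) (by linarith) tπ
      · norm_num
    · exact ⟨by show (0:ℝ) < t - 2 * α; linarith, by show t - 2 * α < π; linarith⟩

lemma st_mem {α : ℝ} (hα : α ∈ Set.Ioo 0 (π / 6)) {t : ℝ} (ht : t ∈ Set.Ioo 0 π) :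
    ∀ n, st α t n ∈ Set.Ioo 0 π
  | 0 => ht
  | n + 1 => (nxt_spec hα (st_mem hα ht n)).2

lemma st_iter (α t : ℝ) : ∀ n, iterT α (fun m => nxt α (st α t m)) n t = st α t n := by
  intro n
  induction n with
  | zero => rfl
  | succ n ih =>
    show T α (nxt α (st α t n)) (iterT α (fun m => nxt α (st α t m)) n t) = st α t (n + 1)
    rw [ih]
    rfl

/-! ### Iteration bookkeeping -/

lemma iterT_congr {α t : ℝ} {x y : ℕ → Fin 4} :
    ∀ {k : ℕ}, (∀ j < k, x j = y j) → iterT α x k t = iterT α y k t := by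
  intro k
  induction k with
  | zero => intro _; rfl
  | succ k ih =>
    intro h
    show T α (x k) (iterT α x k t) = T α (y k) (iterT α y k t)
    rw [ih (fun j hj => h j (Nat.lt_succ_of_lt hj)), h k (Nat.lt_succ_self k)]

lemma iterT_if_le (α t : ℝ) (x y : ℕ → Fin 4) (k : ℕ) :
    ∀ j ≤ k, iterT α (fun j => if j < k then x j else y (j - k)) j t = iterT α x j t := by
  intro j hj
  apply iterT_congr
  intro m hm
  simp only [if_pos (lt_of_lt_of_le hm hj)]

lemma iterT_if_add (α t : ℝ) (x y : ℕ → Fin 4) (k : ℕ) :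
    ∀ m, iterT α (fun j => if j < k then x j else y (j - k)) (k + m) t
      = iterT α y m (iterT α x k t) := by
  intro m
  induction m with
  | zero => exact iterT_if_le α t x y k k le_rfl
  | succ m ih =>
    show T α (if k + m < k then x (k + m) else y (k + m - k))
        (iterT α (fun j => if j < k then x j else y (j - k)) (k + m) t)
      = T α (y m) (iterT α y m (iterT α x k t))
    have hmm : k + m - k = m := by omega
    rw [if_neg (by omega), hmm, ih]

/-! ### Reachability -/

def Reach (α t t' : ℝ) : Prop :=
  ∃ (k : ℕ) (x : ℕ → Fin 4),
    (∀ j < k, 0 < p α (x j) (iterT α x j t)) ∧ iterT α x k t = t'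

lemma reach_refl (α t : ℝ) : Reach α t t :=
  ⟨0, fun _ => 0, fun j hj => absurd hj (Nat.not_lt_zero j), rfl⟩

lemma reach_trans {α t t' t'' : ℝ} (h1 : Reach α t t') (h2 : Reach α t' t'') :
    Reach α t t'' := by
  obtain ⟨k, x, hx, he⟩ := h1
  obtain ⟨m, y, hy, he'⟩ := h2
  refine ⟨k + m, fun j => if j < k then x j else y (j - k), ?_, ?_⟩
  · intro j hj
    by_cases h : j < k
    · show 0 < p α (if j < k then x j else y (j - k))
        (iterT α (fun j => if j < k then x j else y (j - k)) j t)
      rw [if_pos h, iterT_if_le α t x y k j h.le]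
      exact hx j h
    · obtain ⟨n, rfl⟩ : ∃ n, j = k + n := ⟨j - k, by omega⟩
      have hn : n < m := by omega
      show 0 < p α (if k + n < k then x (k + n) else y (k + n - k))
        (iterT α (fun j => if j < k then x j else y (j - k)) (k + n) t)
      have hnn : k + n - k = n := by omega
      rw [if_neg (by omega), hnn, iterT_if_add α t x y k n, he]
      exact hy n hn
  · rw [iterT_if_add α t x y k m, he]
    exact he'

lemma reach_states {α t : ℝ} (hα : α ∈ Set.Ioo 0 (π / 6)) (ht : t ∈ Set.Ioo 0 π)
    {x : ℕ → Fin 4} {k : ℕ} (hx : ∀ j < k, 0 < p α (x j) (iterT α x j t)) :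
    ∀ j ≤ k, iterT α x j t ∈ Set.Ioo 0 π := by
  intro j
  induction j with
  | zero => intro _; exact ht
  | succ j ih =>
    intro hj
    have hjk : j < k := by omega
    exact (rev hα (x j) (ih hjk.le) (hx j hjk)).1

lemma reach_symm {α t t' : ℝ} (hα : α ∈ Set.Ioo 0 (π / 6)) (ht : t ∈ Set.Ioo 0 π)
    (h : Reach α t t') : Reach α t' t := by
  obtain ⟨k, x, hx, he⟩ := h
  have states := reach_states hα ht hx
  have key : ∀ j ≤ k,
      iterT α (fun j => pinv (x (k - 1 - j))) j t' = iterT α x (k - j) t := by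
    intro j
    induction j with
    | zero => intro _; exact he.symm
    | succ j ih =>
      intro hj
      have hjk : j < k := by omega
      show T α (pinv (x (k - 1 - j))) (iterT α (fun j => pinv (x (k - 1 - j))) j t')
        = iterT α x (k - (j + 1)) t
      rw [ih hjk.le]
      have hs : k - j = (k - 1 - j) + 1 := by omega
      rw [hs]
      show T α (pinv (x (k - 1 - j))) (T α (x (k - 1 - j)) (iterT α x (k - 1 - j) t))
        = iterT α x (k - (j + 1)) t
      rw [T_pinv]
      have : k - (j + 1) = k - 1 - j := by omega
      rw [this]
  refine ⟨k, fun j => pinv (x (k - 1 - j)), ?_, ?_⟩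
  · intro j hj
    show 0 < p α (pinv (x (k - 1 - j)))
      (iterT α (fun j => pinv (x (k - 1 - j))) j t')
    rw [key j hj.le]
    have hs : k - j = (k - 1 - j) + 1 := by omega
    rw [hs]
    have hmk : k - 1 - j < k := by omega
    exact (rev hα (x (k - 1 - j)) (states _ hmk.le) (hx _ hmk)).2
  · have h0 := key k le_rfl
    rwa [Nat.sub_self] at h0

/-! ### Characterization of `Cset` -/

lemma mem_Cset_iff {α t : ℝ} (hα : α ∈ Set.Ioo 0 (π / 6)) (ht : t ∈ Set.Ioo 0 π)
    {t' : ℝ} : t' ∈ Cset α t ↔ t' ∈ Set.Ioo 0 π ∧ Reach α t t' := by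
  constructor
  · rintro ⟨hI, x, k, hx, he⟩
    refine ⟨hI, k, x, ?_, he⟩
    intro j _
    have h1 : 0 < ∏ i ∈ Finset.range j, p α (x i) (iterT α x i t) := hx j
    have h2 : 0 < ∏ i ∈ Finset.range (j + 1), p α (x i) (iterT α x i t) := hx (j + 1)
    rw [Finset.prod_range_succ] at h2
    nlinarith
  · rintro ⟨hI, k, x, hx, he⟩
    refine ⟨hI, fun j => if j < k then x j else nxt α (st α t' (j - k)), k, ?_, ?_⟩
    · intro n
      apply Finset.prod_pos
      intro j _
      by_cases h : j < k
      · show 0 < p α (if j < k then x j else nxt α (st α t' (j - k)))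
          (iterT α (fun j => if j < k then x j else nxt α (st α t' (j - k))) j t)
        rw [if_pos h,
          iterT_if_le α t x (fun n => nxt α (st α t' n)) k j h.le]
        exact hx j h
      · obtain ⟨m, rfl⟩ : ∃ m, j = k + m := ⟨j - k, by omega⟩
        show 0 < p α (if k + m < k then x (k + m) else nxt α (st α t' (k + m - k)))
          (iterT α (fun j => if j < k then x j else nxt α (st α t' (j - k))) (k + m) t)
        have hmm : k + m - k = m := by omega
        rw [if_neg (by omega), hmm,
          iterT_if_add α t x (fun n => nxt α (st α t' n)) k m, he, st_iter]
        exact (nxt_spec hα (st_mem hα hI m)).1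
    · rw [iterT_if_le α t x (fun n => nxt α (st α t' n)) k k le_rfl]
      exact he

lemma Cset_eq_of_mem {α t t' : ℝ} (hα : α ∈ Set.Ioo 0 (π / 6)) (ht : t ∈ Set.Ioo 0 π)
    (ht' : t' ∈ Set.Ioo 0 π) (h : t' ∈ Cset α t) : Cset α t' = Cset α t := by
  have hr : Reach α t t' := ((mem_Cset_iff hα ht).1 h).2
  have hr' : Reach α t' t := reach_symm hα ht hr
  ext z
  rw [mem_Cset_iff hα ht', mem_Cset_iff hα ht]
  constructor
  · rintro ⟨h1, h2⟩
    exact ⟨h1, reach_trans hr h2⟩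
  · rintro ⟨h1, h2⟩
    exact ⟨h1, reach_trans hr' h2⟩

end RBAux

open RBAux in

/-- for all `θ, θ' ∈ (0, π)`, either `C(θ) ∩ C(θ') = ∅` or
`C(θ) = C(θ')`; in particular, if `θ' ∈ C(θ)` then `C(θ') = C(θ)`. -/
theorem Cset_disjoint_or_eq (α : ℝ) (hα : α ∈ Set.Ioo 0 (π / 6)) :
    ∀ θ ∈ Set.Ioo 0 π, ∀ θ' ∈ Set.Ioo 0 π,
      (Cset α θ ∩ Cset α θ' = ∅ ∨ Cset α θ = Cset α θ') ∧
      (θ' ∈ Cset α θ → Cset α θ' = Cset α θ) := by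
  intro θ hθ θ' hθ'
  constructor
  · by_cases h : Cset α θ ∩ Cset α θ' = ∅
    · exact Or.inl h
    · right
      obtain ⟨η, hη⟩ := Set.nonempty_iff_ne_empty.2 h
      have hηI : η ∈ Set.Ioo 0 π := hη.1.1
      rw [← Cset_eq_of_mem hα hθ hηI hη.1, ← Cset_eq_of_mem hα hθ' hηI hη.2]
  · intro h
    exact Cset_eq_of_mem hα hθ hθ' h
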